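/- For any real constants ħ ≠ 0, α₆, α₇ and ε with ε² = 1, the function V₁(r) = 5ħ/(2r²) + 3ħα₆ + εħ/(r²√(2 + α₇ħ²r²)), defined for r > 0 (with 2 + α₇ħ²r² > 0), satisfies the nonlinear ordinary differential equation ħ³(115 + 414α₆r² + 540α₆²r⁴ + 216α₆³r⁶) − 6ħ²r²(23 + 60α₆r² + 36α₆²r⁴)V₁ + 12ħr⁴(5 + 6α₆r²)V₁² − 8r⁶V₁³ + 4ħ²r³V₁' = 0. -/

import Mathlib

/-- The explicit potential
`V₁(r) = 5ħ/(2r²) + 3ħα₆ + εħ/(r²√(2 + α₇ħ²r²))`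
satisfies the nonlinear ODE
`ħ³(115 + 414α₆r² + 540α₆²r⁴ + 216α₆³r⁶) − 6ħ²r²(23 + 60α₆r² + 36α₆²r⁴)V₁`
`+ 12ħr⁴(5 + 6α₆r²)V₁² − 8r⁶V₁³ + 4ħ²r³V₁' = 0`
on any open interval `I ⊆ (0,∞)` where `2 + α₇ħ²r² > 0`. -/
theorem explicit_V1_solves_ode (hbar α₆ α₇ ε : ℝ) (hb : hbar ≠ 0) (hε : ε ^ 2 = 1)
    (I : Set ℝ) (hIopen : IsOpen I) (hIpos : I ⊆ Set.Ioi (0 : ℝ))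
    (hI : ∀ r ∈ I, 0 < 2 + α₇ * hbar ^ 2 * r ^ 2) :
    let V₁ : ℝ → ℝ := fun r =>
      5 * hbar / (2 * r ^ 2) + 3 * hbar * α₆ +
        ε * hbar / (r ^ 2 * Real.sqrt (2 + α₇ * hbar ^ 2 * r ^ 2))
    ∀ r ∈ I,
      hbar ^ 3 * (115 + 414 * α₆ * r ^ 2 + 540 * α₆ ^ 2 * r ^ 4 + 216 * α₆ ^ 3 * r ^ 6)
        - 6 * hbar ^ 2 * r ^ 2 * (23 + 60 * α₆ * r ^ 2 + 36 * α₆ ^ 2 * r ^ 4) * V₁ r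
        + 12 * hbar * r ^ 4 * (5 + 6 * α₆ * r ^ 2) * V₁ r ^ 2
        - 8 * r ^ 6 * V₁ r ^ 3
        + 4 * hbar ^ 2 * r ^ 3 * deriv V₁ r = 0 := by
  intro V₁ r hr
  have hrpos : 0 < r := hIpos hr
  have hr0 : r ≠ 0 := ne_of_gt hrpos
  have hc : 0 < 2 + α₇ * hbar ^ 2 * r ^ 2 := hI r hr
  set s : ℝ := Real.sqrt (2 + α₇ * hbar ^ 2 * r ^ 2) with hsdef
  have hspos : 0 < s := Real.sqrt_pos.mpr hc
  have hs0 : s ≠ 0 := ne_of_gt hspos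
  have hs2 : s ^ 2 = 2 + α₇ * hbar ^ 2 * r ^ 2 := Real.sq_sqrt hc.le
  -- derivative of V₁ at r
  have hder : HasDerivAt V₁
      (-5 * hbar / r ^ 3 - ε * hbar * (s ^ 2 - 2) / (r ^ 3 * s ^ 3)
        - 2 * ε * hbar / (r ^ 3 * s)) r := by
    have h1 : HasDerivAt (fun x : ℝ => 5 * hbar / (2 * x ^ 2)) (-5 * hbar / r ^ 3) r := by
      have hd : HasDerivAt (fun x : ℝ => 2 * x ^ 2) (2 * (2 * r ^ 1)) r :=
        (hasDerivAt_pow 2 r).const_mul 2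
      have := (hasDerivAt_const r (5 * hbar)).div hd (by positivity)
      convert this using 1
      iterate 3 rfl
      field_simp
      ring
    have hin : HasDerivAt (fun x : ℝ => 2 + α₇ * hbar ^ 2 * x ^ 2)
        (α₇ * hbar ^ 2 * (2 * r ^ 1)) r := by
      simpa using ((hasDerivAt_pow 2 r).const_mul (α₇ * hbar ^ 2)).const_add 2
    have hsq : HasDerivAt (fun x : ℝ => Real.sqrt (2 + α₇ * hbar ^ 2 * x ^ 2))
        (α₇ * hbar ^ 2 * (2 * r ^ 1) / (2 * s)) r := hin.sqrt (ne_of_gt hc)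
    have hg : HasDerivAt (fun x : ℝ => x ^ 2 * Real.sqrt (2 + α₇ * hbar ^ 2 * x ^ 2))
        (2 * r ^ 1 * s + r ^ 2 * (α₇ * hbar ^ 2 * (2 * r ^ 1) / (2 * s))) r :=
      (hasDerivAt_pow 2 r).mul hsq
    have hgne : r ^ 2 * s ≠ 0 := by positivity
    have h2 := (hasDerivAt_const r (ε * hbar)).div hg hgne
    have h12 := (h1.add_const (3 * hbar * α₆)).add h2
    convert h12 using 1
    iterate 3 rfl
    rw [← hsdef]
    have hα : α₇ * hbar ^ 2 = (s ^ 2 - 2) / r ^ 2 := by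
      field_simp
      linarith [hs2]
    rw [hα]
    field_simp
    ring
  rw [hder.deriv]
  have hε' : ε = 1 ∨ ε = -1 := by
    rcases mul_eq_zero.mp (show (ε - 1) * (ε + 1) = 0 by linear_combination hε) with h | h
    · left; linarith
    · right; linarith
  show hbar ^ 3 * (115 + 414 * α₆ * r ^ 2 + 540 * α₆ ^ 2 * r ^ 4 + 216 * α₆ ^ 3 * r ^ 6)
        - 6 * hbar ^ 2 * r ^ 2 * (23 + 60 * α₆ * r ^ 2 + 36 * α₆ ^ 2 * r ^ 4) *
          (5 * hbar / (2 * r ^ 2) + 3 * hbar * α₆ + ε * hbar / (r ^ 2 * s))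
        + 12 * hbar * r ^ 4 * (5 + 6 * α₆ * r ^ 2) *
          (5 * hbar / (2 * r ^ 2) + 3 * hbar * α₆ + ε * hbar / (r ^ 2 * s)) ^ 2
        - 8 * r ^ 6 *
          (5 * hbar / (2 * r ^ 2) + 3 * hbar * α₆ + ε * hbar / (r ^ 2 * s)) ^ 3
        + 4 * hbar ^ 2 * r ^ 3 *
          (-5 * hbar / r ^ 3 - ε * hbar * (s ^ 2 - 2) / (r ^ 3 * s ^ 3)
            - 2 * ε * hbar / (r ^ 3 * s)) = 0
  clear_value s
  clear hsdef hder
  rcases hε' with h | h <;> subst h <;> field_simp <;> ring
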